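/- Let u, v : ℝ → ℝ be n times differentiable on an interval I, and let x ∈ I with v(x) ≠ 0. Define w_n(x) as the determinant of the (n+1)×(n+1) lower Hessenberg matrix whose first column is (u, u', ..., u^{(n)}) evaluated at x, and whose (i,j) entry for j ≥ 2 is C(i-1, j-2) · v^{(i-j+1)}(x) when i-j+1 ≥ 0 and 0 otherwise. Then the n-th derivative of u/v at x equals (-1)^n w_n(x) / v(x)^{n+1}. -/

import Mathlib

open scoped Nat

open Finset

lemma iteratedDerivWithin_of_isOpen' {f : ℝ → ℝ} {s : Set ℝ} (hs : IsOpen s) {k : ℕ}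
    {x : ℝ} (hx : x ∈ s) : iteratedDerivWithin k f s x = iteratedDeriv k f x := by
  rw [iteratedDerivWithin_eq_iteratedFDerivWithin, iteratedDeriv_eq_iteratedFDeriv,
    iteratedFDerivWithin_of_isOpen k hs hx]

lemma hasDerivAt_iteratedDeriv_aux {f : ℝ → ℝ} {s : Set ℝ} (hs : IsOpen s)
    {m k : ℕ} (hf : ContDiffOn ℝ (m + 1) f s) (hk : k ≤ m) {x : ℝ} (hx : x ∈ s) :
    HasDerivAt (iteratedDeriv k f) (iteratedDeriv (k + 1) f x) x := by
  have h1 : DifferentiableOn ℝ (iteratedDerivWithin k f s) s :=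
    hf.differentiableOn_iteratedDerivWithin (by exact_mod_cast Nat.lt_succ_of_le hk)
      hs.uniqueDiffOn
  have hev : iteratedDerivWithin k f s =ᶠ[nhds x] iteratedDeriv k f :=
    Filter.eventuallyEq_of_mem (hs.mem_nhds hx) fun y hy =>
      iteratedDerivWithin_of_isOpen' hs hy
  have h2 : DifferentiableAt ℝ (iteratedDeriv k f) x :=
    ((h1 x hx).differentiableAt (hs.mem_nhds hx)).congr_of_eventuallyEq hev.symm
  rw [iteratedDeriv_succ]
  exact h2.hasDerivAt

lemma leibniz_aux {f g : ℝ → ℝ} {s : Set ℝ} (hs : IsOpen s) (m : ℕ)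
    (hf : ContDiffOn ℝ m f s) (hg : ContDiffOn ℝ m g s) :
    ∀ x ∈ s, iteratedDeriv m (fun y => f y * g y) x =
      ∑ k ∈ range (m + 1),
        (m.choose k : ℝ) * iteratedDeriv k f x * iteratedDeriv (m - k) g x := by
  induction m with
  | zero => intro x hx; simp
  | succ m ih =>
    intro x hx
    have hf' : ContDiffOn ℝ m f s := hf.of_le (by exact_mod_cast Nat.le_succ m)
    have hg' : ContDiffOn ℝ m g s := hg.of_le (by exact_mod_cast Nat.le_succ m)
    have hev : iteratedDeriv m (fun y => f y * g y) =ᶠ[nhds x]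
        fun y => ∑ k ∈ range (m + 1),
          (m.choose k : ℝ) * iteratedDeriv k f y * iteratedDeriv (m - k) g y :=
      Filter.eventuallyEq_of_mem (hs.mem_nhds hx) fun y hy => ih hf' hg' y hy
    rw [iteratedDeriv_succ, hev.deriv_eq]
    have hterm : ∀ k ∈ range (m + 1), HasDerivAt
        (fun y => (m.choose k : ℝ) * iteratedDeriv k f y * iteratedDeriv (m - k) g y)
        ((m.choose k : ℝ) * iteratedDeriv (k + 1) f x * iteratedDeriv (m - k) g x
          + (m.choose k : ℝ) * iteratedDeriv k f x * iteratedDeriv (m - k + 1) g x) x := by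
      intro k hk
      have hk' : k ≤ m := Nat.lt_succ_iff.mp (mem_range.mp hk)
      have h1 := hasDerivAt_iteratedDeriv_aux hs hf hk' hx
      have h2 := hasDerivAt_iteratedDeriv_aux hs hg (Nat.sub_le m k) hx
      exact (h1.const_mul ((m.choose k : ℝ))).mul h2
    rw [(HasDerivAt.fun_sum hterm).deriv]
    have key := Finset.sum_choose_succ_mul
      (fun i j => iteratedDeriv i f x * iteratedDeriv j g x) m
    simp only [mul_assoc] at key ⊢
    rw [key, Finset.sum_add_distrib, add_comm]
    congr 1
    exact Finset.sum_congr rfl fun k hk => by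
      rw [show m - k + 1 = m + 1 - k from by
        have := mem_range.mp hk; omega]

lemma det_P_aux (m : ℕ) (a : Fin (m + 1) → ℝ) :
    (Matrix.of fun i j : Fin (m + 1) =>
      if (j : ℕ) = 0 then a i else if (i : ℕ) + 1 = (j : ℕ) then (1 : ℝ) else 0).det
      = (-1) ^ m * a (Fin.last m) := by
  rw [Matrix.det_succ_row _ (Fin.last m), Finset.sum_eq_single_of_mem 0 (mem_univ 0)]
  · have hminor : (Matrix.of fun i j : Fin (m + 1) =>
        if (j : ℕ) = 0 then a i else if (i : ℕ) + 1 = (j : ℕ) then (1 : ℝ) else 0).submatrix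
        (Fin.last m).succAbove (0 : Fin (m + 1)).succAbove = 1 := by
      ext i' j'
      simp only [Matrix.submatrix_apply, Fin.succAbove_last, Fin.zero_succAbove,
        Matrix.of_apply, Fin.val_succ, Matrix.one_apply]
      rw [if_neg (by omega)]
      by_cases h : i' = j'
      · subst h; rw [if_pos (by simp), if_pos rfl]
      · rw [if_neg (by simpa using fun hh => h (Fin.ext hh)), if_neg h]
    rw [hminor, Matrix.det_one]
    simp [Fin.val_last]
  · intro j _ hj
    have hj' : (j : ℕ) ≠ 0 := fun h => hj (Fin.ext h)
    simp only [Matrix.of_apply, Fin.val_last]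
    rw [if_neg hj', if_neg (by omega)]
    ring

/-- Determinantal formula for the `n`-th derivative of a quotient of two functions:
if `u, v` are `n` times continuously differentiable on an open interval `I`, `x ∈ I`
and `v x ≠ 0`, then `(u/v)^{(n)}(x) = (-1)^n wₙ(x) / v(x)^{n+1}`, where `wₙ(x)` is the
determinant of the `(n+1)×(n+1)` lower Hessenberg matrix whose first column is
`(u, u', …, u^{(n)})` at `x` and whose `(i,j)` entry for `j ≥ 2` (1-based) is
`C(i-1, j-2)·v^{(i-j+1)}(x)` when `i-j+1 ≥ 0` and `0` otherwise. -/
theorem deriv_quotient_det (n : ℕ) (u v : ℝ → ℝ) (I : Set ℝ)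
    (hI : IsOpen I) (hI' : I.OrdConnected)
    (hu : ContDiffOn ℝ n u I) (hv : ContDiffOn ℝ n v I)
    (x : ℝ) (hx : x ∈ I) (hvx : v x ≠ 0) :
    iteratedDeriv n (fun y => u y / v y) x =
      (-1 : ℝ) ^ n *
        (Matrix.of fun i j : Fin (n + 1) =>
          if (j : ℕ) = 0 then iteratedDeriv i u x
          else if (j : ℕ) ≤ (i : ℕ) + 1 then
            ((i : ℕ).choose ((j : ℕ) - 1) : ℝ) * iteratedDeriv ((i : ℕ) + 1 - (j : ℕ)) v x
          else 0).det / v x ^ (n + 1) := by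
  classical
  set s : Set ℝ := I ∩ v ⁻¹' {0}ᶜ with hs_def
  have hso : IsOpen s := hv.continuousOn.isOpen_inter_preimage hI isOpen_compl_singleton
  have hxs : x ∈ s := ⟨hx, by simpa using hvx⟩
  have hvs : ∀ y ∈ s, v y ≠ 0 := fun y hy => by simpa using hy.2
  set q : ℝ → ℝ := fun y => u y / v y with hq_def
  have hqC : ContDiffOn ℝ n q s :=
    (hu.mono Set.inter_subset_left).div (hv.mono Set.inter_subset_left) hvs
  have hvC : ContDiffOn ℝ n v s := hv.mono Set.inter_subset_left
  have key : ∀ i : ℕ, i ≤ n → iteratedDeriv i u x =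
      ∑ k ∈ range (i + 1),
        (i.choose k : ℝ) * iteratedDeriv k q x * iteratedDeriv (i - k) v x := by
    intro i hi
    have hEq : Set.EqOn u (fun y => q y * v y) s := fun y hy =>
      (div_mul_cancel₀ (u y) (hvs y hy)).symm
    have h1 : iteratedDeriv i u x = iteratedDeriv i (fun y => q y * v y) x :=
      hEq.iteratedDeriv_of_isOpen hso i hxs
    rw [h1, leibniz_aux hso i (hqC.of_le (by exact_mod_cast hi))
      (hvC.of_le (by exact_mod_cast hi)) x hxs]
  set Q : Matrix (Fin (n + 1)) (Fin (n + 1)) ℝ :=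
    Matrix.of (fun i k : Fin (n + 1) => if (k : ℕ) ≤ (i : ℕ) then
      ((i : ℕ).choose (k : ℕ) : ℝ) * iteratedDeriv ((i : ℕ) - (k : ℕ)) v x else 0) with hQ_def
  set P : Matrix (Fin (n + 1)) (Fin (n + 1)) ℝ :=
    Matrix.of (fun k j : Fin (n + 1) => if (j : ℕ) = 0 then iteratedDeriv (k : ℕ) q x
      else if (k : ℕ) + 1 = (j : ℕ) then 1 else 0) with hP_def
  have hMQP : (Matrix.of fun i j : Fin (n + 1) =>
      if (j : ℕ) = 0 then iteratedDeriv i u x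
      else if (j : ℕ) ≤ (i : ℕ) + 1 then
        ((i : ℕ).choose ((j : ℕ) - 1) : ℝ) * iteratedDeriv ((i : ℕ) + 1 - (j : ℕ)) v x
      else 0) = Q * P := by
    ext i j
    rw [Matrix.mul_apply]
    by_cases hj : (j : ℕ) = 0
    · simp only [Matrix.of_apply, hQ_def, hP_def, hj, if_pos]
      rw [key i (by omega)]
      rw [Fin.sum_univ_eq_sum_range (fun k =>
        (if k ≤ (i : ℕ) then ((i : ℕ).choose k : ℝ) * iteratedDeriv ((i : ℕ) - k) v x else 0)
          * iteratedDeriv k q x) (n + 1)]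
      rw [← Finset.sum_subset (Finset.range_subset_range.mpr (show (i : ℕ) + 1 ≤ n + 1 by omega))
        (fun k _ hk => by
          rw [if_neg (by simp only [mem_range] at hk ⊢; omega), zero_mul])]
      refine Finset.sum_congr rfl fun k hk => ?_
      rw [if_pos (by have := mem_range.mp hk; omega)]
      ring
    · simp only [Matrix.of_apply, hQ_def, hP_def, if_neg hj]
      rw [Finset.sum_eq_single_of_mem (⟨(j : ℕ) - 1, by omega⟩ : Fin (n + 1)) (mem_univ _)
        (fun k _ hk => by
          rw [if_neg (fun h : (k : ℕ) + 1 = (j : ℕ) =>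
            hk (Fin.ext (show (k : ℕ) = (j : ℕ) - 1 by omega))), mul_zero])]
      have hval : ((⟨(j : ℕ) - 1, by omega⟩ : Fin (n + 1)) : ℕ) = (j : ℕ) - 1 := rfl
      rw [if_pos (show ((⟨(j : ℕ) - 1, by omega⟩ : Fin (n + 1)) : ℕ) + 1 = (j : ℕ) by
        rw [hval]; omega), mul_one]
      by_cases hij : (j : ℕ) ≤ (i : ℕ) + 1
      · rw [if_pos hij, if_pos (show ((⟨(j : ℕ) - 1, by omega⟩ : Fin (n + 1)) : ℕ) ≤ (i : ℕ) by
          rw [hval]; omega)]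
        rw [hval, show (i : ℕ) - ((j : ℕ) - 1) = (i : ℕ) + 1 - (j : ℕ) by omega]
      · rw [if_neg hij, if_neg (show ¬ ((⟨(j : ℕ) - 1, by omega⟩ : Fin (n + 1)) : ℕ) ≤ (i : ℕ) by
          rw [hval]; omega)]
  have hdetQ : Q.det = v x ^ (n + 1) := by
    rw [Matrix.det_of_lowerTriangular Q (fun i j hij => by
      have : (i : ℕ) < (j : ℕ) := hij
      simp only [hQ_def, Matrix.of_apply]
      rw [if_neg (by omega)])]
    have : ∀ i : Fin (n + 1), Q i i = v x := fun i => by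
      simp [hQ_def, Nat.choose_self, iteratedDeriv_zero]
    rw [Finset.prod_congr rfl fun i _ => this i]
    simp
  have hdetP : P.det = (-1) ^ n * iteratedDeriv n q x := by
    have := det_P_aux n (fun k : Fin (n + 1) => iteratedDeriv (k : ℕ) q x)
    simpa [Fin.val_last, hP_def] using this
  rw [hMQP, Matrix.det_mul, hdetQ, hdetP]
  have hpow : ((-1 : ℝ)) ^ n * ((-1 : ℝ)) ^ n = 1 := by
    rw [← mul_pow]; norm_num
  have hvpow : v x ^ (n + 1) ≠ 0 := pow_ne_zero _ hvx
  rw [show ((-1 : ℝ)) ^ n * (v x ^ (n + 1) * ((-1 : ℝ) ^ n * iteratedDeriv n q x))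
      = v x ^ (n + 1) * iteratedDeriv n q x from by
    calc ((-1 : ℝ)) ^ n * (v x ^ (n + 1) * ((-1 : ℝ) ^ n * iteratedDeriv n q x))
        = ((-1 : ℝ) ^ n * (-1 : ℝ) ^ n) * (v x ^ (n + 1) * iteratedDeriv n q x) := by ring
      _ = v x ^ (n + 1) * iteratedDeriv n q x := by rw [hpow, one_mul]]
  rw [mul_comm, mul_div_assoc, div_self hvpow, mul_one]
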